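/- Let X = {X(t), t ∈ ℝ^d} be a stochastically continuous and proper (E,D)-w.o.s.s. random field with values in ℝ^m, and suppose E has two distinct positive real eigenvalues λ₁ ≠ λ₂ with corresponding real eigenvectors. Then X is operator-self-similar in the sense of Hudson and Mason (i.e. for every r > 0 there exists a vector a(r) ∈ ℝ^m with {X(r^E t), t∈ℝ^d} ≡fdd {r^D X(t) + a(r), t∈ℝ^d}) if and only if b_r(t) depends only on r and |t|, i.e. there is a function g with b_r(t) = g(r,|t|) for all r > 0 and t ∈ ℝ^d. -/

import Mathlib

open MeasureTheory Filter Matrix Topology Set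
open scoped ENNReal NNReal

/-- `mpow r A` is `r^A := exp((ln r) A)` for `r > 0` and a real square matrix `A`. -/
noncomputable def mpow {n : ℕ} (r : ℝ) (A : Matrix (Fin n) (Fin n) ℝ) :
    Matrix (Fin n) (Fin n) ℝ :=
  NormedSpace.exp (Real.log r • A)

/-- The set of (complex) eigenvalues of a real square matrix. -/
def matSpectrum {n : ℕ} (A : Matrix (Fin n) (Fin n) ℝ) : Set ℂ :=
  spectrum ℂ (A.map (Complex.ofReal))

/-- `QSet n` is `Q(ℝⁿ)`: matrices whose eigenvalues all have positive real part. -/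
def QSet (n : ℕ) : Set (Matrix (Fin n) (Fin n) ℝ) :=
  {A | ∀ μ ∈ matSpectrum A, 0 < μ.re}

/-- `MSet n` is `M(ℝⁿ)`: matrices whose eigenvalues all have nonnegative real part and
such that every eigenvalue with zero real part is a simple root of the minimal polynomial. -/
def MSet (n : ℕ) : Set (Matrix (Fin n) (Fin n) ℝ) :=
  {A | ∀ μ ∈ matSpectrum A, 0 ≤ μ.re ∧
    (μ.re = 0 → (minpoly ℂ (A.map (Complex.ofReal))).rootMultiplicity μ = 1)}

/-- Equality of all finite-dimensional distributions of two random fields. -/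
def IdentFDD {Ω T β : Type*} [MeasurableSpace Ω] [MeasurableSpace β]
    (P : Measure Ω) (Y Z : T → Ω → β) : Prop :=
  ∀ (k : ℕ) (t : Fin k → T),
    P.map (fun ω i => Y (t i) ω) = P.map (fun ω i => Z (t i) ω)

/-- Stochastic continuity: `X s → X t` in probability whenever `s → t`. -/
def StochContinuous {Ω : Type*} [MeasurableSpace Ω] (P : Measure Ω) {d m : ℕ}
    (X : (Fin d → ℝ) → Ω → (Fin m → ℝ)) : Prop :=
  ∀ (t : Fin d → ℝ), ∀ ε > (0 : ℝ),
    Tendsto (fun s => P {ω | ε ≤ dist (X s ω) (X t ω)}) (𝓝 t) (𝓝 0)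

/-- A distribution on `ℝ^m` is full if its support is not contained in any proper
hyperplane; equivalently, it does not give full mass to any hyperplane. -/
def IsFullMeasure {m : ℕ} (μ : Measure (Fin m → ℝ)) : Prop :=
  ∀ (y : Fin m → ℝ), y ≠ 0 → ∀ c : ℝ, μ {x | ∑ i, x i * y i = c} ≠ 1

/-- A random field is proper if the distribution of `X t` is full for every `t ≠ 0`. -/
def ProperField {Ω : Type*} [MeasurableSpace Ω] (P : Measure Ω) {d m : ℕ}
    (X : (Fin d → ℝ) → Ω → (Fin m → ℝ)) : Prop :=
  ∀ t : Fin d → ℝ, t ≠ 0 → IsFullMeasure (P.map (X t))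

/-- Wide-sense operator-self-similarity with time-variable scaling exponent `E`. -/
def WOSS {Ω : Type*} [MeasurableSpace Ω] (P : Measure Ω) {d m : ℕ}
    (X : (Fin d → ℝ) → Ω → (Fin m → ℝ)) (E : Matrix (Fin d) (Fin d) ℝ) : Prop :=
  ∀ r : ℝ, 0 < r → ∃ (B : Matrix (Fin m) (Fin m) ℝ) (a : (Fin d → ℝ) → (Fin m → ℝ)),
    IdentFDD P (fun t ω => X (mpow r E *ᵥ t) ω) (fun t ω => B *ᵥ X t ω + a t)

/-- The operator norm `max_{|x|=1} |Q x|` (Euclidean norms) of a matrix. -/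
noncomputable def opNorm {n m : ℕ} (Q : Matrix (Fin m) (Fin n) ℝ) : ℝ :=
  ‖LinearMap.toContinuousLinearMap (Matrix.toEuclideanLin Q)‖

/-- The Euclidean norm of a vector in `ℝ^n`. -/
noncomputable def euclNorm {n : ℕ} (v : Fin n → ℝ) : ℝ :=
  Real.sqrt (∑ i, v i ^ 2)

/-- `G_r`: invertible matrices `A` such that `{X(r^E t)} ≡fdd {A X(t) + b(t)}`
for some deterministic function `b : ℝ^d → ℝ^m`. -/
def GSet {Ω : Type*} [MeasurableSpace Ω] (P : Measure Ω) {d m : ℕ}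
    (X : (Fin d → ℝ) → Ω → (Fin m → ℝ)) (E : Matrix (Fin d) (Fin d) ℝ)
    (r : ℝ) : Set (Matrix (Fin m) (Fin m) ℝ) :=
  {A | IsUnit A ∧ ∃ b : (Fin d → ℝ) → (Fin m → ℝ),
    IdentFDD P (fun t ω => X (mpow r E *ᵥ t) ω) (fun t ω => A *ᵥ X t ω + b t)}

/-- `G = ⋃_{r>0} G_r`. -/
def GAll {Ω : Type*} [MeasurableSpace Ω] (P : Measure Ω) {d m : ℕ}
    (X : (Fin d → ℝ) → Ω → (Fin m → ℝ)) (E : Matrix (Fin d) (Fin d) ℝ) :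
    Set (Matrix (Fin m) (Fin m) ℝ) :=
  ⋃ r ∈ Set.Ioi (0 : ℝ), GSet P X E r

/-- A radial part `τ` under the operator `E`. -/
structure IsRadialPart {d : ℕ} (E : Matrix (Fin d) (Fin d) ℝ)
    (τ : (Fin d → ℝ) → ℝ) : Prop where
  continuous : Continuous τ
  nonneg : ∀ x, 0 ≤ τ x
  pos : ∀ x : Fin d → ℝ, x ≠ 0 → 0 < τ x
  map_zero : τ 0 = 0
  even : ∀ x, τ (-x) = τ x
  scaling : ∀ r : ℝ, 0 < r → ∀ x, τ (mpow r E *ᵥ x) = r * τ x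
  isCompact_sphere : IsCompact {x | τ x = 1}
  zero_not_mem : (0 : Fin d → ℝ) ∉ {x | τ x = 1}
  tendsto_atTop : ∀ M : ℝ, ∃ R : ℝ, ∀ x : Fin d → ℝ, R ≤ ‖x‖ → M ≤ τ x
  tendsto_zero : Tendsto τ (𝓝 0) (𝓝 0)

/-- `φ` is `E`-homogeneous: `φ(r^E x) = r φ(x)` for all `r > 0` and `x ≠ 0`. -/
def EHomogeneous {d : ℕ} (E : Matrix (Fin d) (Fin d) ℝ)
    (φ : (Fin d → ℝ) → ℝ) : Prop :=
  ∀ r : ℝ, 0 < r → ∀ x : Fin d → ℝ, x ≠ 0 → φ (mpow r E *ᵥ x) = r * φ x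

/-- `ψ` is `(β,E)`-admissible with respect to the radial part `τ`. -/
def Admissible {d : ℕ} (τ : (Fin d → ℝ) → ℝ) (β : ℝ)
    (ψ : (Fin d → ℝ) → ℝ) : Prop :=
  (∀ x : Fin d → ℝ, x ≠ 0 → 0 < ψ x) ∧
  ∀ A B : ℝ, 0 < A → A < B → ∃ C : ℝ, 0 < C ∧ ∀ y : Fin d → ℝ,
    A ≤ euclNorm y → euclNorm y ≤ B → ∀ x : Fin d → ℝ, τ x ≤ 1 →
      |ψ (x + y) - ψ y| ≤ C * τ x ^ β


open scoped Nat

lemma measurable_matvec {n m : ℕ} (M : Matrix (Fin m) (Fin n) ℝ) :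
    Measurable fun v : Fin n → ℝ => M *ᵥ v := by
  exact ((Matrix.mulVecLin M).continuous_of_finiteDimensional).measurable

lemma aux_iic (ν : Measure ℝ) [IsProbabilityMeasure ν] {c : ℝ} (hc : 0 < c)
    (h : ∀ x, ν (Iic x) = ν (Iic (x - c))) : False := by
  have hn : ∀ (x : ℝ) (n : ℕ), ν (Iic x) = ν (Iic (x - n * c)) := by
    intro x n
    induction n with
    | zero => simp
    | succ k ih =>
      rw [ih, h (x - k * c)]
      congr 2
      push_cast
      ring
  have hzero : ∀ x : ℝ, ν (Iic x) = 0 := by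
    intro x
    have hanti : Antitone fun n : ℕ => Iic (x - n * c) := by
      intro a b hab
      apply Iic_subset_Iic.2
      have : (a : ℝ) * c ≤ b * c := by
        apply mul_le_mul_of_nonneg_right _ hc.le
        exact_mod_cast hab
      linarith
    have hti := tendsto_measure_iInter_atTop
      (μ := ν) (s := fun n : ℕ => Iic (x - n * c))
      (fun n => measurableSet_Iic.nullMeasurableSet) hanti ⟨0, measure_ne_top _ _⟩
    have hint : ⋂ n : ℕ, Iic (x - n * c) = ∅ := by
      apply eq_empty_iff_forall_notMem.2
      intro y hy
      obtain ⟨n, hn'⟩ := exists_nat_gt ((x - y) / c)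
      have hy' := mem_iInter.1 hy n
      rw [mem_Iic] at hy'
      rw [div_lt_iff₀ hc] at hn'
      linarith
    rw [hint, measure_empty] at hti
    have hconst : (ν ∘ fun n : ℕ => Iic (x - n * c)) = fun _ => ν (Iic x) := by
      funext n; exact (hn x n).symm
    rw [hconst] at hti
    exact tendsto_nhds_unique tendsto_const_nhds hti
  have huniv : ν univ = 0 := by
    have hU : (univ : Set ℝ) = ⋃ n : ℕ, Iic (n : ℝ) := by
      ext y
      simp only [mem_univ, mem_iUnion, mem_Iic, true_iff]
      exact exists_nat_ge y
    have hmono : Monotone fun n : ℕ => Iic ((n : ℕ) : ℝ) := fun a b hab =>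
      Iic_subset_Iic.2 (by exact_mod_cast hab)
    have hti := tendsto_measure_iUnion_atTop (μ := ν) hmono
    have hconst : (ν ∘ fun n : ℕ => Iic ((n : ℕ) : ℝ)) = fun _ => 0 := by
      funext n; exact hzero _
    rw [hconst, ← hU] at hti
    exact tendsto_nhds_unique hti tendsto_const_nhds
  rw [measure_univ] at huniv
  exact one_ne_zero huniv

lemma map_add_right_inj {m : ℕ} (μ : Measure (Fin m → ℝ)) [IsProbabilityMeasure μ]
    {u v : Fin m → ℝ} (h : μ.map (· + u) = μ.map (· + v)) : u = v := by
  set w := u - v with hw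
  have hinv : μ.map (· + w) = μ := by
    have h2 := congrArg (fun ν : Measure (Fin m → ℝ) => ν.map (· + (-v))) h
    rw [Measure.map_map (measurable_add_const _) (measurable_add_const _),
        Measure.map_map (measurable_add_const _) (measurable_add_const _)] at h2
    have e1 : ((· + (-v)) ∘ (· + u)) = fun x : Fin m → ℝ => x + w := by
      funext x; simp [hw]; abel
    have e2 : ((· + (-v)) ∘ (· + v)) = fun x : Fin m → ℝ => x := by
      funext x; simp
    rw [e1, e2] at h2
    simpa using h2
  by_contra hne
  have hwne : w ≠ 0 := fun h0 => hne (by rwa [hw, sub_eq_zero] at h0)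
  set f : (Fin m → ℝ) → ℝ := fun x => ∑ i, x i * w i with hf
  have hfm : Measurable f :=
    Finset.measurable_sum _ fun j _ => (measurable_pi_apply j).mul_const _
  set c : ℝ := ∑ i, w i * w i with hcdef
  have hc : 0 < c := by
    obtain ⟨i, hi⟩ := Function.ne_iff.1 hwne
    apply Finset.sum_pos' (fun j _ => mul_self_nonneg _) ⟨i, Finset.mem_univ i, ?_⟩
    exact mul_self_pos.2 hi
  set ν : Measure ℝ := μ.map f with hν
  haveI : IsProbabilityMeasure ν := Measure.isProbabilityMeasure_map hfm.aemeasurable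
  refine aux_iic ν hc fun x => ?_
  have h1 : ν (Iic x) = μ (f ⁻¹' Iic x) := Measure.map_apply hfm measurableSet_Iic
  have h2 : ν (Iic (x - c)) = μ (f ⁻¹' Iic (x - c)) :=
    Measure.map_apply hfm measurableSet_Iic
  rw [h1, h2]
  conv_lhs => rw [← hinv]
  rw [Measure.map_apply (measurable_add_const _) (hfm measurableSet_Iic)]
  congr 1
  ext y
  simp only [mem_preimage, mem_Iic, hf]
  have : (∑ i, (y + w) i * w i) = (∑ i, y i * w i) + c := by
    simp only [Pi.add_apply, hcdef, add_mul]
    rw [Finset.sum_add_distrib]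
  rw [this]
  constructor <;> intro <;> linarith

lemma marginal_of_identFDD {Ω : Type*} [MeasurableSpace Ω] (P : Measure Ω) {d m : ℕ}
    {Y Z : (Fin d → ℝ) → Ω → (Fin m → ℝ)} (h : IdentFDD P Y Z) (t : Fin d → ℝ)
    (hY : Measurable (Y t)) (hZ : Measurable (Z t)) : P.map (Y t) = P.map (Z t) := by
  have h1 := h 1 (fun _ => t)
  have e : Measurable fun v : Fin 1 → (Fin m → ℝ) => v 0 := measurable_pi_apply 0
  have eY : P.map (Y t) = (P.map (fun ω (_ : Fin 1) => Y t ω)).map (fun v => v 0) := by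
    rw [Measure.map_map e (measurable_pi_lambda _ (fun _ => hY))]
    rfl
  have eZ : P.map (Z t) = (P.map (fun ω (_ : Fin 1) => Z t ω)).map (fun v => v 0) := by
    rw [Measure.map_map e (measurable_pi_lambda _ (fun _ => hZ))]
    rfl
  rw [eY, eZ, h1]

lemma shift_cancel {Ω : Type*} [MeasurableSpace Ω] (P : Measure Ω) [IsProbabilityMeasure P]
    {m : ℕ} (f : Ω → (Fin m → ℝ)) (hf : Measurable f) (u v : Fin m → ℝ)
    (h : P.map (fun ω => f ω + u) = P.map (fun ω => f ω + v)) : u = v := by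
  haveI : IsProbabilityMeasure (P.map f) := Measure.isProbabilityMeasure_map hf.aemeasurable
  apply map_add_right_inj (P.map f)
  rw [Measure.map_map (measurable_add_const u) hf,
      Measure.map_map (measurable_add_const v) hf]
  exact h

lemma mpow_mul {n : ℕ} (A : Matrix (Fin n) (Fin n) ℝ) {r s : ℝ} (hr : 0 < r) (hs : 0 < s) :
    mpow (r * s) A = mpow r A * mpow s A := by
  unfold mpow
  rw [Real.log_mul hr.ne' hs.ne', add_smul]
  exact Matrix.exp_add_of_commute _ _ (((Commute.refl A).smul_left _).smul_right _)

lemma exp_mulVec_eig {n : ℕ} (A : Matrix (Fin n) (Fin n) ℝ) (c : ℝ) (ξ : Fin n → ℝ)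
    (h : A *ᵥ ξ = c • ξ) : NormedSpace.exp A *ᵥ ξ = Real.exp c • ξ := by
  letI : SeminormedRing (Matrix (Fin n) (Fin n) ℝ) := Matrix.linftyOpSemiNormedRing
  letI : NormedRing (Matrix (Fin n) (Fin n) ℝ) := Matrix.linftyOpNormedRing
  letI : NormedAlgebra ℝ (Matrix (Fin n) (Fin n) ℝ) := Matrix.linftyOpNormedAlgebra
  have hpow : ∀ k : ℕ, A ^ k *ᵥ ξ = c ^ k • ξ := by
    intro k
    induction k with
    | zero => simp
    | succ k ih =>
      rw [pow_succ, ← Matrix.mulVec_mulVec, h, Matrix.mulVec_smul, ih, smul_smul,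
        ← pow_succ']
  have hsum : Summable fun k : ℕ => (k !⁻¹ : ℝ) • A ^ k :=
    NormedSpace.expSeries_summable' (𝕂 := ℝ) A
  let L : Matrix (Fin n) (Fin n) ℝ →ₗ[ℝ] (Fin n → ℝ) :=
    { toFun := fun M => M *ᵥ ξ
      map_add' := fun M N => Matrix.add_mulVec M N ξ
      map_smul' := fun r M => Matrix.smul_mulVec r M ξ }
  let L' : Matrix (Fin n) (Fin n) ℝ →L[ℝ] (Fin n → ℝ) := LinearMap.toContinuousLinearMap L
  have key : NormedSpace.exp A *ᵥ ξ = L' (NormedSpace.exp A) := rfl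
  rw [key, NormedSpace.exp_eq_tsum ℝ, L'.map_tsum hsum]
  have : ∀ k : ℕ, L' ((k !⁻¹ : ℝ) • A ^ k) = ((k !⁻¹ : ℝ) * c ^ k) • ξ := by
    intro k
    rw [L'.map_smul]
    show (k !⁻¹ : ℝ) • (A ^ k *ᵥ ξ) = _
    rw [hpow k, smul_smul]
  simp_rw [this]
  have hsc : Summable fun k : ℕ => (k !⁻¹ : ℝ) * c ^ k := by
    simpa [smul_eq_mul] using NormedSpace.expSeries_summable' (𝕂 := ℝ) (𝔸 := ℝ) c
  rw [hsc.tsum_smul_const]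
  congr 1
  rw [Real.exp_eq_exp_ℝ, NormedSpace.exp_eq_tsum ℝ]
  simp [smul_eq_mul]

lemma mpow_mulVec_eig {n : ℕ} (E : Matrix (Fin n) (Fin n) ℝ) {lam : ℝ} {ξ : Fin n → ℝ}
    (h : E *ᵥ ξ = lam • ξ) (r : ℝ) :
    mpow r E *ᵥ ξ = Real.exp (lam * Real.log r) • ξ := by
  unfold mpow
  have : (Real.log r • E) *ᵥ ξ = (lam * Real.log r) • ξ := by
    rw [Matrix.smul_mulVec, h, smul_smul]
    ring_nf
  exact exp_mulVec_eig _ _ _ this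

lemma euclNorm_smul {n : ℕ} (c : ℝ) (v : Fin n → ℝ) :
    euclNorm (c • v) = |c| * euclNorm v := by
  unfold euclNorm
  rw [← Real.sqrt_sq_eq_abs, ← Real.sqrt_mul (sq_nonneg c)]
  congr 1
  rw [Finset.mul_sum]
  exact Finset.sum_congr rfl fun i _ => by simp [mul_pow]

lemma euclNorm_pos {n : ℕ} {v : Fin n → ℝ} (hv : v ≠ 0) : 0 < euclNorm v := by
  unfold euclNorm
  apply Real.sqrt_pos.2
  obtain ⟨i, hi⟩ := Function.ne_iff.1 hv
  exact Finset.sum_pos' (fun j _ => sq_nonneg _) ⟨i, Finset.mem_univ i, by rw [pow_two]; exact mul_self_pos.2 hi⟩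

/-- **Proposition 3.1.** If `E` has two distinct positive eigenvalues (with real
eigenvectors), then an `(E,D)`-w.o.s.s. field is o.s.s. in the sense of Hudson and Mason
iff `b_r(t)` depends only on `r` and `|t|`. -/
theorem woss_hudson_mason_iff_radial_shift {d m : ℕ} (hd : 2 ≤ d) (hm : 2 ≤ m)
    {Ω : Type*} [MeasurableSpace Ω] (P : Measure Ω) [IsProbabilityMeasure P]
    (X : (Fin d → ℝ) → Ω → (Fin m → ℝ)) (hXmeas : ∀ t, Measurable (X t))
    (E : Matrix (Fin d) (Fin d) ℝ) (hE : E ∈ QSet d)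
    (hXc : StochContinuous P X) (hXp : ProperField P X)
    (D : Matrix (Fin m) (Fin m) ℝ) (hD : D ∈ MSet m)
    (b : ℝ → (Fin d → ℝ) → (Fin m → ℝ))
    (hbc : ∀ r : ℝ, 0 < r → ∀ t : Fin d → ℝ,
      ContinuousAt (fun p : ℝ × (Fin d → ℝ) => b p.1 p.2) (r, t))
    (hfdd : ∀ r : ℝ, 0 < r →
      IdentFDD P (fun t ω => X (mpow r E *ᵥ t) ω)
        (fun t ω => mpow r D *ᵥ X t ω + b r t))
    (lam₁ lam₂ : ℝ) (hlam₁ : 0 < lam₁) (hlam₂ : 0 < lam₂) (hne : lam₁ ≠ lam₂)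
    (ξ₁ ξ₂ : Fin d → ℝ) (hξ₁ : ξ₁ ≠ 0) (hξ₂ : ξ₂ ≠ 0)
    (hEξ₁ : E *ᵥ ξ₁ = lam₁ • ξ₁) (hEξ₂ : E *ᵥ ξ₂ = lam₂ • ξ₂) :
    (∀ r : ℝ, 0 < r → ∃ a : Fin m → ℝ,
      IdentFDD P (fun t ω => X (mpow r E *ᵥ t) ω)
        (fun t ω => mpow r D *ᵥ X t ω + a)) ↔
    (∃ g : ℝ → ℝ → (Fin m → ℝ), ∀ r : ℝ, 0 < r → ∀ t : Fin d → ℝ,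
      b r t = g r (euclNorm t)) := by
  -- measurability of the affine images
  have hZmeas : ∀ (M : Matrix (Fin m) (Fin m) ℝ) (t : Fin d → ℝ) (v : Fin m → ℝ),
      Measurable fun ω => M *ᵥ X t ω + v :=
    fun M t v => (((measurable_matvec M).comp (hXmeas t)).add_const v)
  have hshift : ∀ r : ℝ, 0 < r → ∀ (t : Fin d → ℝ) (u v : Fin m → ℝ),
      (P.map fun ω => mpow r D *ᵥ X t ω + u) = (P.map fun ω => mpow r D *ᵥ X t ω + v) →
        u = v := fun r hr t u v h =>
    shift_cancel P (fun ω => mpow r D *ᵥ X t ω) ((measurable_matvec _).comp (hXmeas t)) u v h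
  constructor
  · -- o.s.s. implies b r is constant in t, hence radial
    intro hoss
    refine ⟨fun p s => b p (s • ξ₁), ?_⟩
    intro r hr t
    obtain ⟨a, ha⟩ := hoss r hr
    have hba : ∀ u : Fin d → ℝ, b r u = a := by
      intro u
      have m1 := marginal_of_identFDD P (hfdd r hr) u (hXmeas _) (hZmeas _ _ _)
      have m2 := marginal_of_identFDD P ha u (hXmeas _) (hZmeas _ _ _)
      exact hshift r hr u _ _ (m1.symm.trans m2)
    show b r t = b r (euclNorm t • ξ₁)
    rw [hba t, hba (euclNorm t • ξ₁)]
  · -- radial shift implies o.s.s.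
    rintro ⟨g, hg⟩ r hr
    -- The cocycle identity for b
    have cocycle : ∀ p s : ℝ, 0 < p → 0 < s → ∀ t : Fin d → ℝ,
        b (p * s) t = mpow p D *ᵥ b s t + b p (mpow s E *ᵥ t) := by
      intro p s hp hs t
      have hps : 0 < p * s := mul_pos hp hs
      have m1 := marginal_of_identFDD P (hfdd (p * s) hps) t (hXmeas _) (hZmeas _ _ _)
      have hEmul : mpow (p * s) E *ᵥ t = mpow p E *ᵥ (mpow s E *ᵥ t) := by
        rw [Matrix.mulVec_mulVec, ← mpow_mul E hp hs]
      have m2 := marginal_of_identFDD P (hfdd p hp) (mpow s E *ᵥ t)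
        (hXmeas _) (hZmeas _ _ _)
      have m3 := marginal_of_identFDD P (hfdd s hs) t (hXmeas _) (hZmeas _ _ _)
      have hφ : Measurable fun v : Fin m → ℝ => mpow p D *ᵥ v + b p (mpow s E *ᵥ t) :=
        (measurable_matvec _).add_const _
      have m4 : P.map (fun ω => mpow p D *ᵥ X (mpow s E *ᵥ t) ω + b p (mpow s E *ᵥ t))
          = P.map (fun ω => mpow p D *ᵥ (mpow s D *ᵥ X t ω + b s t) + b p (mpow s E *ᵥ t)) := by
        have h1 : (fun ω => mpow p D *ᵥ X (mpow s E *ᵥ t) ω + b p (mpow s E *ᵥ t))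
            = (fun v => mpow p D *ᵥ v + b p (mpow s E *ᵥ t)) ∘
              (fun ω => X (mpow s E *ᵥ t) ω) := rfl
        have h2 : (fun ω => mpow p D *ᵥ (mpow s D *ᵥ X t ω + b s t) + b p (mpow s E *ᵥ t))
            = (fun v => mpow p D *ᵥ v + b p (mpow s E *ᵥ t)) ∘
              (fun ω => mpow s D *ᵥ X t ω + b s t) := rfl
        rw [h1, h2, ← Measure.map_map hφ (hXmeas _), ← Measure.map_map hφ (hZmeas _ _ _), m3]
      have m5 : (fun ω : Ω => mpow p D *ᵥ (mpow s D *ᵥ X t ω + b s t) + b p (mpow s E *ᵥ t))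
          = fun ω => mpow (p * s) D *ᵥ X t ω + (mpow p D *ᵥ b s t + b p (mpow s E *ᵥ t)) := by
        funext ω
        rw [Matrix.mulVec_add, Matrix.mulVec_mulVec, ← mpow_mul D hp hs, add_assoc]
      refine hshift (p * s) hps t _ _ ?_
      calc P.map (fun ω => mpow (p * s) D *ᵥ X t ω + b (p * s) t)
          = P.map (fun ω => X (mpow (p * s) E *ᵥ t) ω) := m1.symm
        _ = P.map (fun ω => X (mpow p E *ᵥ (mpow s E *ᵥ t)) ω) := by rw [hEmul]
        _ = P.map (fun ω => mpow p D *ᵥ X (mpow s E *ᵥ t) ω + b p (mpow s E *ᵥ t)) := m2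
        _ = P.map (fun ω => mpow p D *ᵥ (mpow s D *ᵥ X t ω + b s t)
              + b p (mpow s E *ᵥ t)) := m4
        _ = P.map (fun ω => mpow (p * s) D *ᵥ X t ω
              + (mpow p D *ᵥ b s t + b p (mpow s E *ᵥ t))) := by rw [m5]
    -- normalized eigenvectors
    have hn₁ : 0 < euclNorm ξ₁ := euclNorm_pos hξ₁
    have hn₂ : 0 < euclNorm ξ₂ := euclNorm_pos hξ₂
    set ζ₁ : Fin d → ℝ := (euclNorm ξ₁)⁻¹ • ξ₁ with hζ₁
    set ζ₂ : Fin d → ℝ := (euclNorm ξ₂)⁻¹ • ξ₂ with hζ₂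
    have hζ₁norm : euclNorm ζ₁ = 1 := by
      rw [hζ₁, euclNorm_smul, abs_of_pos (inv_pos.2 hn₁), inv_mul_cancel₀ hn₁.ne']
    have hζ₂norm : euclNorm ζ₂ = 1 := by
      rw [hζ₂, euclNorm_smul, abs_of_pos (inv_pos.2 hn₂), inv_mul_cancel₀ hn₂.ne']
    have hEζ₁ : E *ᵥ ζ₁ = lam₁ • ζ₁ := by
      rw [hζ₁, Matrix.mulVec_smul, hEξ₁, smul_comm]
    have hEζ₂ : E *ᵥ ζ₂ = lam₂ • ζ₂ := by
      rw [hζ₂, Matrix.mulVec_smul, hEξ₂, smul_comm]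
    -- key consequence of the two eigenvalues
    have geq : ∀ p s : ℝ, 0 < p → 0 < s →
        g p (Real.exp (lam₁ * Real.log s)) = g p (Real.exp (lam₂ * Real.log s)) := by
      intro p s hp hs
      have c1 := cocycle p s hp hs ζ₁
      have c2 := cocycle p s hp hs ζ₂
      rw [mpow_mulVec_eig E hEζ₁ s] at c1
      rw [mpow_mulVec_eig E hEζ₂ s] at c2
      have e1 : euclNorm (Real.exp (lam₁ * Real.log s) • ζ₁) = Real.exp (lam₁ * Real.log s) := by
        rw [euclNorm_smul, abs_of_pos (Real.exp_pos _), hζ₁norm, mul_one]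
      have e2 : euclNorm (Real.exp (lam₂ * Real.log s) • ζ₂) = Real.exp (lam₂ * Real.log s) := by
        rw [euclNorm_smul, abs_of_pos (Real.exp_pos _), hζ₂norm, mul_one]
      rw [hg (p * s) (mul_pos hp hs) ζ₁, hg s hs ζ₁, hg p hp _, e1, hζ₁norm] at c1
      rw [hg (p * s) (mul_pos hp hs) ζ₂, hg s hs ζ₂, hg p hp _, e2, hζ₂norm] at c2
      exact add_left_cancel (c1.symm.trans c2)
    -- a contraction exponent
    obtain ⟨α, hα0, hα1, hαrel⟩ : ∃ α : ℝ, 0 < α ∧ α < 1 ∧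
        ∀ u : ℝ, 0 < u → g r u = g r (Real.exp (α * Real.log u)) := by
      rcases hne.lt_or_gt with hlt | hlt
      · refine ⟨lam₁ / lam₂, div_pos hlam₁ hlam₂, (div_lt_one hlam₂).2 hlt, fun u hu => ?_⟩
        have hgeq := geq r (Real.exp (Real.log u / lam₂)) hr (Real.exp_pos _)
        rw [Real.log_exp] at hgeq
        have e2 : lam₂ * (Real.log u / lam₂) = Real.log u := by field_simp
        have e1 : lam₁ * (Real.log u / lam₂) = lam₁ / lam₂ * Real.log u := by ring
        rw [e1, e2, Real.exp_log hu] at hgeq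
        exact hgeq.symm
      · refine ⟨lam₂ / lam₁, div_pos hlam₂ hlam₁, (div_lt_one hlam₁).2 hlt, fun u hu => ?_⟩
        have hgeq := geq r (Real.exp (Real.log u / lam₁)) hr (Real.exp_pos _)
        rw [Real.log_exp] at hgeq
        have e1 : lam₁ * (Real.log u / lam₁) = Real.log u := by field_simp
        have e2 : lam₂ * (Real.log u / lam₁) = lam₂ / lam₁ * Real.log u := by ring
        rw [e1, e2, Real.exp_log hu] at hgeq
        exact hgeq
    -- continuity of u ↦ b r (u • ζ₁)
    have Hcont : ∀ u₀ : ℝ, ContinuousAt (fun u : ℝ => b r (u • ζ₁)) u₀ := by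
      intro u₀
      have h1 : Continuous fun u : ℝ => ((r, u • ζ₁) : ℝ × (Fin d → ℝ)) :=
        continuous_const.prodMk (continuous_id.smul continuous_const)
      have h2 : ContinuousAt (fun u : ℝ => ((r, u • ζ₁) : ℝ × (Fin d → ℝ))) u₀ :=
        h1.continuousAt
      exact ContinuousAt.comp (f := fun u : ℝ => ((r, u • ζ₁) : ℝ × (Fin d → ℝ)))
        (x := u₀) (hbc r hr (u₀ • ζ₁)) h2
    have Hval : ∀ u : ℝ, 0 < u → b r (u • ζ₁) = g r u := by
      intro u hu
      rw [hg r hr (u • ζ₁), euclNorm_smul, abs_of_pos hu, hζ₁norm, mul_one]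
    -- g r is constant on (0, ∞)
    have hgconst : ∀ u : ℝ, 0 < u → g r u = g r 1 := by
      intro u hu
      have hiter : ∀ k : ℕ, g r u = g r (Real.exp (α ^ k * Real.log u)) := by
        intro k
        induction k with
        | zero => rw [pow_zero, one_mul, Real.exp_log hu]
        | succ k ih =>
          rw [ih, hαrel (Real.exp (α ^ k * Real.log u)) (Real.exp_pos _), Real.log_exp,
            ← mul_assoc, ← pow_succ']
      have h0 : Tendsto (fun k : ℕ => α ^ k * Real.log u) atTop (𝓝 0) := by
        simpa using
          (tendsto_pow_atTop_nhds_zero_of_lt_one hα0.le hα1).mul_const (Real.log u)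
      have hlim : Tendsto (fun k : ℕ => Real.exp (α ^ k * Real.log u)) atTop (𝓝 1) := by
        have h2 := (Real.continuous_exp.tendsto 0).comp h0
        simpa [Function.comp_def, Real.exp_zero] using h2
      have h1 : Tendsto (fun k : ℕ => b r (Real.exp (α ^ k * Real.log u) • ζ₁)) atTop
          (𝓝 (b r ((1 : ℝ) • ζ₁))) := (Hcont 1).tendsto.comp hlim
      have h2 : (fun k : ℕ => b r (Real.exp (α ^ k * Real.log u) • ζ₁))
          = fun _ => g r u := by
        funext k
        rw [Hval _ (Real.exp_pos _), ← hiter k]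
      rw [h2] at h1
      have h3 := tendsto_nhds_unique tendsto_const_nhds h1
      exact h3.trans (Hval 1 one_pos)
    -- b r is constant
    have hbconst : ∀ t : Fin d → ℝ, b r t = g r 1 := by
      intro t
      by_cases ht : t = 0
      · subst ht
        have hlim0 : Tendsto (fun k : ℕ => 1 / ((k : ℝ) + 1)) atTop (𝓝 0) :=
          tendsto_one_div_add_atTop_nhds_zero_nat
        have hc : Tendsto (fun k : ℕ => b r ((1 / ((k : ℝ) + 1)) • ζ₁)) atTop
            (𝓝 (b r ((0 : ℝ) • ζ₁))) := (Hcont 0).tendsto.comp hlim0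
        have he : (fun k : ℕ => b r ((1 / ((k : ℝ) + 1)) • ζ₁)) = fun _ => g r 1 := by
          funext k
          rw [Hval _ (by positivity), hgconst _ (by positivity)]
        rw [he] at hc
        have h3 := tendsto_nhds_unique tendsto_const_nhds hc
        rw [zero_smul] at h3
        exact h3.symm
      · rw [hg r hr t, hgconst _ (euclNorm_pos ht)]
    refine ⟨g r 1, ?_⟩
    have funeq : (fun (t : Fin d → ℝ) (ω : Ω) => mpow r D *ᵥ X t ω + b r t)
        = fun t ω => mpow r D *ᵥ X t ω + g r 1 := by
      funext t ω
      rw [hbconst t]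
    rw [← funeq]
    exact hfdd r hr
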